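/- If a positive differentiable function M : [0,∞) → (0,∞) satisfies M'(t) ≤ 4M(t)² + 2Λ·M(t) for a constant Λ > 0, then log(M(t)/((2/Λ)M(t)+1)) − log(M(0)/((2/Λ)M(0)+1)) ≤ 2Λt for all t ≥ 0, and consequently M(t) ≤ 2M(0) for all t ≤ (1/(2Λ))·log(1 + Λ/(4M(0)+Λ+1)). -/

import Mathlib

theorem doubling_time_estimate (M : ℝ → ℝ) (Λ : ℝ) (hΛ : 0 < Λ)
    (hM : Differentiable ℝ M) (hpos : ∀ t, 0 ≤ t → 0 < M t)
    (hode : ∀ t, 0 ≤ t → deriv M t ≤ 4 * (M t) ^ 2 + 2 * Λ * M t) :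
    (∀ t, 0 ≤ t →
      Real.log (M t / ((2 / Λ) * M t + 1)) - Real.log (M 0 / ((2 / Λ) * M 0 + 1))
        ≤ 2 * Λ * t) ∧
    (∀ t, 0 ≤ t → t ≤ (1 / (2 * Λ)) * Real.log (1 + Λ / (4 * M 0 + Λ + 1)) →
      M t ≤ 2 * M 0) := by
  have hΛ' : Λ ≠ 0 := hΛ.ne'
  have hder : ∀ t, 0 ≤ t →
      HasDerivAt (fun s => Real.log (M s) - Real.log (2 / Λ * M s + 1) - 2 * Λ * s)
        ((M t)⁻¹ * deriv M t - (2 / Λ * M t + 1)⁻¹ * (2 / Λ * deriv M t) - 2 * Λ) t := by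
    intro t ht
    have hm := hpos t ht
    have hden : 0 < 2 / Λ * M t + 1 := by positivity
    have hd1 : HasDerivAt (fun s => Real.log (M s)) ((M t)⁻¹ * deriv M t) t :=
      (Real.hasDerivAt_log hm.ne').comp t (hM t).hasDerivAt
    have hd2 : HasDerivAt (fun s => 2 / Λ * M s + 1) (2 / Λ * deriv M t) t :=
      ((hM t).hasDerivAt.const_mul (2 / Λ)).add_const 1
    have hd3 : HasDerivAt (fun s => Real.log (2 / Λ * M s + 1))
        ((2 / Λ * M t + 1)⁻¹ * (2 / Λ * deriv M t)) t :=
      by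
        have h := Real.hasDerivAt_log hden.ne'
        exact h.comp t hd2
    have hd4 : HasDerivAt (fun s : ℝ => 2 * Λ * s) (2 * Λ) t := by
      simpa using (hasDerivAt_id t).const_mul (2 * Λ)
    exact (hd1.sub hd3).sub hd4
  have hanti : AntitoneOn (fun s => Real.log (M s) - Real.log (2 / Λ * M s + 1) - 2 * Λ * s)
      (Set.Ici (0 : ℝ)) := by
    apply antitoneOn_of_deriv_nonpos (convex_Ici 0)
    · intro t ht
      exact ((hder t ht).differentiableAt.continuousAt).continuousWithinAt
    · intro t ht
      rw [interior_Ici] at ht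
      exact (hder t ht.le).differentiableAt.differentiableWithinAt
    · intro t ht
      rw [interior_Ici] at ht
      have ht' : 0 ≤ t := (Set.mem_Ioi.mp ht).le
      rw [(hder t ht').deriv]
      have hm := hpos t ht'
      have hden : 0 < 2 / Λ * M t + 1 := by positivity
      have key : (M t)⁻¹ * deriv M t - (2 / Λ * M t + 1)⁻¹ * (2 / Λ * deriv M t)
          = deriv M t / (M t * (2 / Λ * M t + 1)) := by
        field_simp
        ring
      rw [key]
      have hb : deriv M t / (M t * (2 / Λ * M t + 1)) ≤ 2 * Λ := by
        rw [div_le_iff₀ (by positivity)]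
        have heq : 2 * Λ * (M t * (2 / Λ * M t + 1)) = 4 * M t ^ 2 + 2 * Λ * M t := by
          field_simp
          ring
        rw [heq]
        exact hode t ht'
      linarith
  have hpart1 : ∀ t, 0 ≤ t →
      Real.log (M t / ((2 / Λ) * M t + 1)) - Real.log (M 0 / ((2 / Λ) * M 0 + 1))
        ≤ 2 * Λ * t := by
    intro t ht
    have h0 : (0 : ℝ) ∈ Set.Ici (0 : ℝ) := Set.mem_Ici.mpr le_rfl
    have h := hanti h0 (Set.mem_Ici.mpr ht) ht
    simp only [mul_zero] at h
    have hm0 := hpos 0 le_rfl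
    have hmt := hpos t ht
    have hd0 : 0 < 2 / Λ * M 0 + 1 := by positivity
    have hdt : 0 < 2 / Λ * M t + 1 := by positivity
    rw [Real.log_div hmt.ne' hdt.ne', Real.log_div hm0.ne' hd0.ne']
    linarith
  refine ⟨hpart1, ?_⟩
  intro t ht ht2
  have hm0 := hpos 0 le_rfl
  have hmt := hpos t ht
  have hd0 : 0 < 2 / Λ * M 0 + 1 := by positivity
  have hdt : 0 < 2 / Λ * M t + 1 := by positivity
  have hden2 : 0 < 4 * M 0 + Λ + 1 := by positivity
  have hL : 2 * Λ * t ≤ Real.log (1 + Λ / (4 * M 0 + Λ + 1)) := by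
    have := mul_le_mul_of_nonneg_left ht2 (show (0 : ℝ) ≤ 2 * Λ by positivity)
    have e : 2 * Λ * (1 / (2 * Λ) * Real.log (1 + Λ / (4 * M 0 + Λ + 1)))
        = Real.log (1 + Λ / (4 * M 0 + Λ + 1)) := by
      field_simp
    linarith [e ▸ this]
  have h1 := hpart1 t ht
  have hlog : Real.log (M t / ((2 / Λ) * M t + 1))
      ≤ Real.log (M 0 / ((2 / Λ) * M 0 + 1) * (1 + Λ / (4 * M 0 + Λ + 1))) := by
    rw [Real.log_mul (by positivity) (by positivity)]
    linarith
  have hf : M t / ((2 / Λ) * M t + 1)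
      ≤ M 0 / ((2 / Λ) * M 0 + 1) * (1 + Λ / (4 * M 0 + Λ + 1)) := by
    have hx : 0 < M t / ((2 / Λ) * M t + 1) := by positivity
    have hy : 0 < M 0 / ((2 / Λ) * M 0 + 1) * (1 + Λ / (4 * M 0 + Λ + 1)) := by positivity
    exact (Real.log_le_log_iff hx hy).mp hlog
  have e1 : (1 : ℝ) + Λ / (4 * M 0 + Λ + 1) = (4 * M 0 + 2 * Λ + 1) / (4 * M 0 + Λ + 1) := by
    field_simp
    ring
  rw [e1, div_mul_div_comm, div_le_div_iff₀ (by positivity) (by positivity)] at hf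
  have hf2 : M t * ((2 * M 0 + Λ) * (4 * M 0 + Λ + 1))
      ≤ M 0 * (4 * M 0 + 2 * Λ + 1) * (2 * M t + Λ) := by
    have h := mul_le_mul_of_nonneg_left hf hΛ.le
    have e2 : Λ * (M t * ((2 / Λ * M 0 + 1) * (4 * M 0 + Λ + 1)))
        = M t * ((2 * M 0 + Λ) * (4 * M 0 + Λ + 1)) := by field_simp
    have e3 : Λ * (M 0 * (4 * M 0 + 2 * Λ + 1) * (2 / Λ * M t + 1))
        = M 0 * (4 * M 0 + 2 * Λ + 1) * (2 * M t + Λ) := by field_simp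
    linarith [e2 ▸ e3 ▸ h]
  nlinarith [hf2, mul_pos hΛ hm0, mul_pos hΛ hmt, mul_pos hmt hm0, mul_pos hΛ hΛ,
    mul_pos (mul_pos hΛ hm0) hm0]
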